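/- Let C be a linear MDS code of length n and dimension k over F_q with generator matrix G (whose rows form a basis of C), and covering radius ρ = n-k. A word u ∈ F_q^n is a deep hole of C (i.e., d(u,C) = n-k) if and only if the (k+1)×n matrix G' obtained by appending u as a new row to G generates a linear MDS code of dimension k+1. -/

import Mathlib

open Matrix

/-- Error distance of a word `u` to a code `C`: the minimum Hamming distance to a codeword. -/
noncomputable def errDist {ι F : Type*} [Fintype ι] [DecidableEq F]
    (u : ι → F) (C : Set (ι → F)) : ℕ :=
  sInf ((fun c => hammingDist u c) '' C)

/-- Minimum distance of a code `C`. -/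
noncomputable def minDist {ι F : Type*} [Fintype ι] [DecidableEq F]
    (C : Set (ι → F)) : ℕ :=
  sInf {d | ∃ c₁ ∈ C, ∃ c₂ ∈ C, c₁ ≠ c₂ ∧ hammingDist c₁ c₂ = d}

section Aux

set_option linter.unusedSectionVars false

variable {F : Type*} [Field F] [DecidableEq F] {n k : ℕ}

lemma aux_mem_span_rows_iff (G : Matrix (Fin k) (Fin n) F) (u : Fin n → F) :
    u ∈ Submodule.span F (Set.range fun i => G i) ↔ ∃ x : Fin k → F, u = x ᵥ* G := by
  rw [Submodule.mem_span_range_iff_exists_fun]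
  constructor
  · rintro ⟨c, hc⟩
    refine ⟨c, ?_⟩
    rw [← hc]
    ext j
    simp [Matrix.vecMul, dotProduct, Finset.sum_apply]
  · rintro ⟨x, rfl⟩
    refine ⟨x, ?_⟩
    ext j
    simp [Matrix.vecMul, dotProduct, Finset.sum_apply]

lemma aux_vecMul_snoc (G : Matrix (Fin k) (Fin n) F) (u : Fin n → F) (y : Fin (k + 1) → F) :
    y ᵥ* Matrix.of (Fin.snoc G u) = (Fin.init y) ᵥ* G + (y (Fin.last k)) • u := by
  ext j
  simp [Matrix.vecMul, dotProduct, Fin.sum_univ_castSucc, Fin.init, Fin.snoc]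

lemma aux_hammingNorm_le (hkn : k < n) {v : Fin n → F}
    (hv : ∀ i : Fin k, v (Fin.castLE hkn.le i) = 0) : hammingNorm v ≤ n - k := by
  classical
  have hecard : (Finset.univ.image (Fin.castLE hkn.le)).card = k := by
    rw [Finset.card_image_of_injective _ (Fin.castLE_injective _), Finset.card_univ,
      Fintype.card_fin]
  have hsub : ({j | v j ≠ 0} : Finset (Fin n)) ⊆ (Finset.univ.image (Fin.castLE hkn.le))ᶜ := by
    intro j hj
    simp only [Finset.mem_filter, Finset.mem_univ, true_and] at hj
    simp only [Finset.mem_compl, Finset.mem_image, not_exists]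
    rintro i ⟨-, rfl⟩
    exact hj (hv i)
  calc hammingNorm v ≤ _ := Finset.card_le_card hsub
    _ = n - k := by
        rw [Finset.card_compl, hecard, Fintype.card_fin]

/-- Covering radius bound: any word is within distance `n - k` of some codeword. -/
lemma aux_covering (hkn : k < n) (G : Matrix (Fin k) (Fin n) F)
    (hker : ∀ x : Fin k → F, x ᵥ* G = 0 → x = 0)
    (hdist : ∀ x : Fin k → F, x ≠ 0 → n - k + 1 ≤ hammingNorm (x ᵥ* G))
    (u : Fin n → F) : ∃ x : Fin k → F, hammingDist u (x ᵥ* G) ≤ n - k := by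
  classical
  set e : Fin k → Fin n := Fin.castLE hkn.le with he
  set φ : (Fin k → F) →ₗ[F] Fin k → F :=
    (LinearMap.funLeft F F e).comp G.vecMulLinear with hφ
  have hφapp : ∀ x i, φ x i = (x ᵥ* G) (e i) := fun x i => rfl
  have hinj : Function.Injective φ := by
    rw [injective_iff_map_eq_zero]
    intro x hx
    by_contra hx0
    have h1 := hdist x hx0
    have h2 : hammingNorm (x ᵥ* G) ≤ n - k :=
      aux_hammingNorm_le hkn (fun i => by
        have := congrFun hx i
        rwa [hφapp] at this)
    omega
  obtain ⟨x, hx⟩ := LinearMap.injective_iff_surjective.mp hinj (fun i => u (e i))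
  refine ⟨x, ?_⟩
  rw [hammingDist_comm, hammingDist_eq_hammingNorm, neg_add_eq_sub]
  refine aux_hammingNorm_le hkn (fun i => ?_)
  have := congrFun hx i
  rw [hφapp] at this
  simp only [Pi.sub_apply]
  rw [this]
  ring

end Aux

theorem stmt0 {F : Type*} [Field F] [Fintype F] [DecidableEq F]
    {n k : ℕ} (hkn : k < n)
    (G : Matrix (Fin k) (Fin n) F)
    (hG : LinearIndependent F (fun i => G i))
    (C : Set (Fin n → F))
    (hC : C = {v | ∃ x : Fin k → F, v = x ᵥ* G})
    (hMDS : minDist C = n - k + 1)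
    (u : Fin n → F) :
    errDist u C = n - k ↔
      (LinearIndependent F (fun i : Fin (k + 1) => Fin.snoc G u i) ∧
        minDist {v | ∃ x : Fin (k + 1) → F, v = x ᵥ* Matrix.of (Fin.snoc G u)} =
          n - (k + 1) + 1) := by
  classical
  have hnk : 0 < n - k := Nat.sub_pos_of_lt hkn
  have hnk1 : n - (k + 1) + 1 = n - k := by omega
  -- basic facts about C
  have hzeroC : (0 : Fin n → F) ∈ C := by
    rw [hC]; exact ⟨0, by simp⟩
  have hker : ∀ x : Fin k → F, x ᵥ* G = 0 → x = 0 := by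
    intro x hx
    have := Fintype.linearIndependent_iff.mp hG x
    have hsum : ∑ i, x i • G i = 0 := by
      ext j
      have := congrFun hx j
      simpa [Matrix.vecMul, dotProduct, Finset.sum_apply] using this
    exact funext (this hsum)
  -- every pair of distinct codewords of C is at distance ≥ n - k + 1
  have hge : ∀ c₁ ∈ C, ∀ c₂ ∈ C, c₁ ≠ c₂ → n - k + 1 ≤ hammingDist c₁ c₂ := by
    intro c₁ h₁ c₂ h₂ hne
    rw [← hMDS]
    exact Nat.sInf_le ⟨c₁, h₁, c₂, h₂, hne, rfl⟩
  have hdistnorm : ∀ x : Fin k → F, x ≠ 0 → n - k + 1 ≤ hammingNorm (x ᵥ* G) := by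
    intro x hx
    have hmem : x ᵥ* G ∈ C := by rw [hC]; exact ⟨x, rfl⟩
    have hne : x ᵥ* G ≠ 0 := fun h => hx (hker x h)
    have := hge _ hmem _ hzeroC hne
    rwa [hammingDist_zero_right] at this
  -- covering radius: some codeword within n - k of u
  obtain ⟨x₀, hx₀⟩ := aux_covering hkn G hker hdistnorm u
  have hcov : errDist u C ≤ n - k := by
    refine le_trans (Nat.sInf_le ⟨x₀ ᵥ* G, ?_, rfl⟩) hx₀
    rw [hC]; exact ⟨x₀, rfl⟩
  set C' : Set (Fin n → F) :=
    {v | ∃ x : Fin (k + 1) → F, v = x ᵥ* Matrix.of (Fin.snoc G u)} with hC'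
  have hC'mem : ∀ (x : Fin k → F) (t : F), x ᵥ* G + t • u ∈ C' := by
    intro x t
    refine ⟨Fin.snoc x t, ?_⟩
    rw [aux_vecMul_snoc]
    simp
  have hC'elt : ∀ v ∈ C', ∃ (x : Fin k → F) (t : F), v = x ᵥ* G + t • u := by
    rintro v ⟨y, rfl⟩
    exact ⟨Fin.init y, y (Fin.last k), aux_vecMul_snoc G u y⟩
  have huC' : u ∈ C' := by
    have := hC'mem 0 1
    simpa using this
  have hCsubC' : ∀ c ∈ C, c ∈ C' := by
    intro c hc
    rw [hC] at hc
    obtain ⟨x, rfl⟩ := hc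
    have := hC'mem x 0
    simpa using this
  -- scaling invariance of hamming norm
  have hnormsmul : ∀ (t : F), t ≠ 0 → ∀ v : Fin n → F, hammingNorm (t • v) = hammingNorm v := by
    intro t ht v
    refine hammingNorm_smul (fun i => ?_) v
    intro a b hab
    exact mul_left_cancel₀ ht hab
  constructor
  · -- forward direction
    intro hE
    have huC : u ∉ C := by
      intro hu
      have : errDist u C ≤ 0 := by
        refine le_trans (Nat.sInf_le ⟨u, hu, rfl⟩) ?_
        simp
      omega
    have hind : LinearIndependent F (fun i : Fin (k + 1) => Fin.snoc G u i) := by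
      refine linearIndependent_fin_snoc.mpr ⟨hG, ?_⟩
      rw [aux_mem_span_rows_iff]
      rintro ⟨x, hx⟩
      exact huC (by rw [hC]; exact ⟨x, hx⟩)
    refine ⟨hind, ?_⟩
    rw [hnk1]
    -- lower bound on distances within C'
    have hlb : ∀ d ∈ {d | ∃ c₁ ∈ C', ∃ c₂ ∈ C', c₁ ≠ c₂ ∧ hammingDist c₁ c₂ = d},
        n - k ≤ d := by
      rintro d ⟨c₁, h₁, c₂, h₂, hne, rfl⟩
      obtain ⟨x₁, t₁, rfl⟩ := hC'elt _ h₁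
      obtain ⟨x₂, t₂, rfl⟩ := hC'elt _ h₂
      rw [hammingDist_comm, hammingDist_eq_hammingNorm, neg_add_eq_sub]
      have hdiff : (x₁ ᵥ* G + t₁ • u) - (x₂ ᵥ* G + t₂ • u)
          = (x₁ - x₂) ᵥ* G + (t₁ - t₂) • u := by
        rw [Matrix.sub_vecMul, sub_smul]
        abel
      rw [hdiff]
      by_cases ht : t₁ - t₂ = 0
      · rw [ht, zero_smul, add_zero]
        have hx12 : x₁ - x₂ ≠ 0 := by
          intro h
          apply hne
          have hx : x₁ = x₂ := by rwa [sub_eq_zero] at h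
          have htt : t₁ = t₂ := by rwa [sub_eq_zero] at ht
          rw [hx, htt]
        have := hdistnorm _ hx12
        omega
      · set t := t₁ - t₂
        set x := x₁ - x₂
        have key : hammingNorm (x ᵥ* G + t • u)
            = hammingDist u (-((t⁻¹ • x) ᵥ* G)) := by
          rw [← hnormsmul t⁻¹ (inv_ne_zero ht) (x ᵥ* G + t • u)]
          rw [hammingDist_comm, hammingDist_eq_hammingNorm, neg_add_eq_sub, sub_neg_eq_add]
          congr 1
          rw [smul_add, smul_smul, inv_mul_cancel₀ ht, one_smul]
          rw [← Matrix.smul_vecMul]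
          abel
        rw [key, ← hE]
        refine Nat.sInf_le ⟨-((t⁻¹ • x) ᵥ* G), ?_, rfl⟩
        rw [hC]
        exact ⟨-(t⁻¹ • x), by rw [Matrix.neg_vecMul]⟩
    -- there exist two codewords in C' at distance exactly n - k
    have hEne : ((fun c => hammingDist u c) '' C).Nonempty := ⟨_, ⟨0, hzeroC, rfl⟩⟩
    have hmem0 := Nat.sInf_mem hEne
    rw [← errDist, hE] at hmem0
    obtain ⟨c, hcC, hcd⟩ := hmem0
    have hmem : n - k ∈ {d | ∃ c₁ ∈ C', ∃ c₂ ∈ C', c₁ ≠ c₂ ∧ hammingDist c₁ c₂ = d} := by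
      refine ⟨u, huC', c, hCsubC' c hcC, ?_, hcd⟩
      intro h
      exact huC (h ▸ hcC)
    exact le_antisymm (Nat.sInf_le hmem) (le_csInf ⟨_, hmem⟩ hlb)
  · -- backward direction
    rintro ⟨hind, hmin⟩
    rw [hnk1] at hmin
    have huC : u ∉ C := by
      intro hu
      have := (linearIndependent_fin_snoc.mp hind).2
      rw [aux_mem_span_rows_iff] at this
      rw [hC] at hu
      exact this hu
    have hlb : ∀ d ∈ (fun c => hammingDist u c) '' C, n - k ≤ d := by
      rintro d ⟨c, hc, rfl⟩
      rw [← hmin]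
      refine Nat.sInf_le ⟨u, huC', c, hCsubC' c hc, ?_, rfl⟩
      intro h
      exact huC (h ▸ hc)
    have hEne : ((fun c => hammingDist u c) '' C).Nonempty := ⟨_, ⟨0, hzeroC, rfl⟩⟩
    exact le_antisymm hcov (le_csInf hEne hlb)
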